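/- Let k ∈ ℕ and let f : ℍ → ℂ satisfy the weight-2k modular transformation law for the full modular group: for every [[a,b],[c,d]] ∈ SL₂(ℤ) and all τ ∈ ℍ, f((aτ+b)/(cτ+d)) = (cτ+d)^{2k} f(τ). Let d ∈ ℕ⁺, c ∈ ℕ and set g = gcd(d,c). Then there exists an integer y such that for all τ ∈ ℍ, f(dτ/(cτ+1)) = (g/d)^{2k}·(cτ+1)^{2k}·f((g²τ + yg)/d). -/

import Mathlib

open Complex UpperHalfPlane Filter Matrix CongruenceSubgroup
open ModularGroup
open scoped Real MatrixGroups Manifold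

noncomputable section

lemma moebius_im_pos (a b c d : ℝ) (h : 0 < a * d - b * c) {z : ℂ} (hz : 0 < z.im) :
    0 < (((a : ℂ) * z + b) / ((c : ℂ) * z + d)).im := by
  have hden : ((c : ℂ) * z + d) ≠ 0 := by
    intro h0
    have him : c * z.im = 0 := by
      have := congrArg Complex.im h0
      simpa using this
    have hc : c = 0 := by
      rcases mul_eq_zero.mp him with hc | hzim
      · exact hc
      · exact absurd hzim hz.ne'
    have hd : d = 0 := by
      have := congrArg Complex.re h0
      simpa [hc] using this
    rw [hc, hd] at h
    simp at h
  have him : (((a : ℂ) * z + b) / ((c : ℂ) * z + d)).im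
      = (a * d - b * c) * z.im / Complex.normSq ((c : ℂ) * z + d) := by
    rw [Complex.div_im]
    simp only [Complex.add_im, Complex.add_re, Complex.mul_im, Complex.mul_re,
      Complex.ofReal_re, Complex.ofReal_im, Complex.normSq_apply]
    ring
  rw [him]
  exact div_pos (mul_pos h hz) (Complex.normSq_pos.mpr hden)

/-- The point `(aτ+b)/(cτ+d)` of `ℍ`, for a real matrix of positive determinant. -/
def mkM (a b c d : ℝ) (h : 0 < a * d - b * c) (τ : ℍ) : ℍ :=
  ⟨((a : ℂ) * τ + b) / ((c : ℂ) * τ + d), moebius_im_pos a b c d h τ.im_pos⟩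

lemma sl_smul_coe (γ : SL(2,ℤ)) (τ : ℍ) :
    ((γ • τ : ℍ) : ℂ) = ((γ 0 0 : ℂ) * τ + γ 0 1) / ((γ 1 0 : ℂ) * τ + γ 1 1) := by
  rw [sl_moeb, UpperHalfPlane.coe_smul]
  simp [UpperHalfPlane.num, UpperHalfPlane.denom, UpperHalfPlane.σ]

lemma sl_denom_ne (γ : SL(2,ℤ)) (τ : ℍ) : ((γ 1 0 : ℂ) * τ + γ 1 1) ≠ 0 := by
  have := UpperHalfPlane.denom_ne_zero (γ : GL(2, ℝ)⁺) τ
  simpa [UpperHalfPlane.denom] using this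

theorem expansion_of_rescaled_level_one_form (k : ℕ) (f : ℍ → ℂ)
    (hf : ∀ γ : SL(2, ℤ), ∀ τ : ℍ,
      f (γ • τ) = ((γ 1 0 : ℂ) * τ + (γ 1 1 : ℂ)) ^ (2 * k) * f τ)
    (d : ℕ) (hd : 0 < d) (c : ℕ) :
    ∃ y : ℤ, ∀ τ : ℍ,
      f (mkM d 0 c 1 (by simp; exact_mod_cast hd) τ) =
        ((Nat.gcd d c : ℂ) / (d : ℂ)) ^ (2 * k) * ((c : ℂ) * τ + 1) ^ (2 * k) *
          f (mkM ((Nat.gcd d c : ℝ) ^ 2) ((y : ℝ) * (Nat.gcd d c : ℝ)) 0 d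
              (by
                have hg : (0 : ℝ) < (Nat.gcd d c : ℝ) := by
                  exact_mod_cast Nat.gcd_pos_of_pos_left c hd
                have hdr : (0 : ℝ) < (d : ℝ) := by exact_mod_cast hd
                nlinarith [mul_pos (mul_pos hg hg) hdr]) τ) := by
  set g : ℕ := Nat.gcd d c with hg
  have hgpos : 0 < g := Nat.gcd_pos_of_pos_left c hd
  set y : ℤ := Nat.gcdB d c with hy
  set A : ℤ := Nat.gcdA d c with hA
  have hbez : (g : ℤ) = d * A + c * y := Nat.gcd_eq_gcd_ab d c
  have hgd : (g : ℤ) ∣ (d : ℤ) := Int.natCast_dvd_natCast.mpr (Nat.gcd_dvd_left d c)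
  have hgc : (g : ℤ) ∣ (c : ℤ) := Int.natCast_dvd_natCast.mpr (Nat.gcd_dvd_right d c)
  obtain ⟨a', ha'⟩ := hgd
  obtain ⟨c', hc'⟩ := hgc
  have hgz : (g : ℤ) ≠ 0 := by exact_mod_cast hgpos.ne'
  have hdet : a' * A - (-y) * c' = 1 := by
    have h2 : (g : ℤ) * (a' * A - (-y) * c') = g * 1 := by
      rw [mul_one]
      calc (g:ℤ) * (a' * A - (-y) * c') = (g * a') * A + (g * c') * y := by ring
      _ = d * A + c * y := by rw [← ha', ← hc']
      _ = g := hbez.symm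
    exact mul_left_cancel₀ hgz h2
  refine ⟨y, fun τ => ?_⟩
  set γ : SL(2, ℤ) := ⟨!![a', -y; c', A], by simpa [Matrix.det_fin_two_of] using hdet⟩ with hγ
  have hγ00 : γ 0 0 = a' := by simp [hγ]
  have hγ01 : γ 0 1 = -y := by simp [hγ]
  have hγ10 : γ 1 0 = c' := by simp [hγ]
  have hγ11 : γ 1 1 = A := by simp [hγ]
  set τ' : ℍ := mkM ((g : ℝ) ^ 2) ((y : ℝ) * (g : ℝ)) 0 d
      (by
        have hgr : (0 : ℝ) < (g : ℝ) := by exact_mod_cast hgpos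
        have hdr : (0 : ℝ) < (d : ℝ) := by exact_mod_cast hd
        nlinarith [mul_pos (mul_pos hgr hgr) hdr]) τ with hτ'
  -- coe of τ'
  have hdz : (d : ℂ) ≠ 0 := by exact_mod_cast hd.ne'
  have hτ'c : (τ' : ℂ) = ((g : ℂ) ^ 2 * τ + y * g) / d := by
    show ((((g:ℝ)^2 : ℝ) : ℂ) * τ + (((y:ℝ) * (g:ℝ) : ℝ) : ℂ)) / (((0:ℝ):ℂ) * τ + ((d:ℕ):ℝ)) = _
    push_cast
    ring_nf
  -- key ℂ identities from ℤ
  have hda : (d : ℂ) = (g : ℂ) * a' := by exact_mod_cast congrArg (Int.cast : ℤ → ℂ) ha'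
  have hcc : (c : ℂ) = (g : ℂ) * c' := by exact_mod_cast congrArg (Int.cast : ℤ → ℂ) hc'
  have hbezc : (g : ℂ) = d * A + c * y := by exact_mod_cast congrArg (Int.cast : ℤ → ℂ) hbez
  have hden1 : ((γ 1 0 : ℂ) * τ' + γ 1 1) ≠ 0 := sl_denom_ne γ τ'
  have hden2 : ((c : ℂ) * τ + 1) ≠ 0 := by
    rcases Nat.eq_zero_or_pos c with hc0 | hc0
    · simp [hc0]
    · intro h0
      have h1 : (c : ℝ) * (τ : ℂ).im = 0 := by simpa using congrArg Complex.im h0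
      rcases mul_eq_zero.mp h1 with h | h
      · exact (Nat.cast_pos.mpr hc0).ne' h
      · exact τ.im_pos.ne' h
  -- denominator relation
  have h2 : (c' : ℂ) * ((g:ℂ)^2 * τ + y * g) + A * d = (g:ℂ) * ((c:ℂ) * τ + 1) := by
    linear_combination (-(g:ℂ) * τ - (y:ℂ)) * hcc - hbezc
  have hdenrel : ((γ 1 0 : ℂ) * τ' + γ 1 1) = ((g : ℂ) / d) * ((c : ℂ) * τ + 1) := by
    rw [hγ10, hγ11, hτ'c]
    field_simp
    linear_combination h2
  -- point relation
  have hpoint : mkM d 0 c 1 (by simp; exact_mod_cast hd) τ = γ • τ' := by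
    apply UpperHalfPlane.ext
    have hs := sl_smul_coe γ τ'
    rw [hγ00, hγ01, hγ10, hγ11] at hs
    rw [hs]
    show ((((d:ℕ):ℝ):ℂ) * τ + ((0:ℝ):ℂ)) / ((((c:ℕ):ℝ):ℂ) * τ + ((1:ℝ):ℂ)) = _
    push_cast
    have hden1' : ((c' : ℂ) * τ' + A) ≠ 0 := by
      rw [hγ10, hγ11] at hden1; exact_mod_cast hden1
    rw [hτ'c] at hden1' ⊢
    rw [div_eq_div_iff hden2 hden1']
    field_simp
    linear_combination (d:ℂ) * (τ:ℂ) * h2 + ((c:ℂ) * τ + 1) * ((g:ℂ) * τ + y) * hda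
  rw [hpoint, hf γ τ', hdenrel, mul_pow]
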